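/- Let α and β be finite sequences of positive integers, and set a = K̆(α), b = K̆(αβ), c = K̆(β). Then K̆(ααβ) = (K̆(αα)/K̆(α)) · b − c, where the ratio K̆(αα)/K̆(α) is a positive integer. -/

import Mathlib

/-- Auxiliary continuant (left recursion on the reversed list). -/
def contA : List ℤ → ℤ
  | [] => 1
  | [a] => a
  | a :: b :: l => a * contA (b :: l) + contA l

/-- Continuant `K(a₁,…,aₙ)`, satisfying `K()=1`, `K(x₁)=x₁`,
`K(x₁,…,xₙ) = xₙ·K(x₁,…,xₙ₋₁) + K(x₁,…,xₙ₋₂)`. -/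
def contK (l : List ℤ) : ℤ := contA l.reverse

/-- `K̆(α)`: continuant of `α` with its last element removed. -/
def Kbr (l : List ℤ) : ℤ := contK l.dropLast

/-- `K(a₂,…,a_{n-1})`, with the convention that an invalid range gives `0`. -/
def Kmid (l : List ℤ) : ℤ := if l.length ≤ 1 then 0 else contK l.tail.dropLast

/-- The reduced matrix `M_{a₁,…,aₙ}` associated to a sequence. -/
def Mmat (l : List ℤ) : Matrix (Fin 2) (Fin 2) ℤ :=
  !![Kmid l, contK l.tail; contK l.dropLast, contK l]

lemma reverse_dropLast' (l : List ℤ) : l.reverse.dropLast = l.tail.reverse := by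
  have h := List.tail_reverse (l := l.reverse)
  rw [List.reverse_reverse] at h
  rw [h, List.reverse_reverse]

lemma tail_dropLast' (l : List ℤ) : l.dropLast.tail = l.tail.dropLast := by
  match l with
  | [] => rfl
  | [x] => rfl
  | x :: y :: m => simp

lemma contA_concat (a : ℤ) : ∀ (l : List ℤ), l ≠ [] →
    contA (l ++ [a]) = a * contA l + contA l.dropLast
  | [b], _ => by simp [contA]; ring
  | [b, c], _ => by simp [contA]; ring
  | b :: c :: d :: l, _ => by
    have h1 := contA_concat a (c :: d :: l) (by simp)
    have h2 := contA_concat a (d :: l) (by simp)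
    have e1 : contA ((b :: c :: d :: l) ++ [a])
        = b * contA ((c :: d :: l) ++ [a]) + contA ((d :: l) ++ [a]) := by
      simp only [List.cons_append]
      cases l <;> simp [contA]
    have e2 : (b :: c :: d :: l).dropLast = b :: c :: (d :: l).dropLast := by simp
    have e3 : contA (b :: c :: (d :: l).dropLast)
        = b * contA (c :: (d :: l).dropLast) + contA ((d :: l).dropLast) := by
      rfl
    have e4 : (c :: d :: l).dropLast = c :: (d :: l).dropLast := by simp
    have e5 : contA (b :: c :: d :: l) = b * contA (c :: d :: l) + contA (d :: l) := rfl
    rw [e1, h1, h2, e2, e3, e4, e5]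
    ring

lemma contK_cons (a : ℤ) (l : List ℤ) (hl : l ≠ []) :
    contK (a :: l) = a * contK l + contK l.tail := by
  unfold contK
  rw [List.reverse_cons, contA_concat a l.reverse (by simpa), reverse_dropLast']

lemma contA_pos : ∀ l : List ℤ, (∀ a ∈ l, 0 < a) → 0 < contA l
  | [], _ => one_pos
  | [a], h => h a (by simp)
  | a :: b :: l, h => by
    have h1 := contA_pos (b :: l) (fun x hx => h x (by simp at hx ⊢; tauto))
    have h2 := contA_pos l (fun x hx => h x (by simp [hx]))
    have ha := h a (by simp)
    show 0 < a * contA (b :: l) + contA l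
    positivity

lemma contK_pos (l : List ℤ) (h : ∀ a ∈ l, 0 < a) : 0 < contK l :=
  contA_pos l.reverse (fun x hx => h x (by simpa using hx))

lemma Mmat_cons (a : ℤ) (l : List ℤ) (hl : l ≠ []) :
    Mmat (a :: l) = !![0, 1; 1, a] * Mmat l := by
  unfold Mmat
  rw [Matrix.mul_fin_two]
  have hlen : ¬ (a :: l).length ≤ 1 := by
    cases l with
    | nil => exact absurd rfl hl
    | cons x m => simp
  have h00 : Kmid (a :: l) = contK l.dropLast := by
    rw [Kmid, if_neg hlen]; rfl
  have h10 : contK (a :: l).dropLast = Kmid l + a * contK l.dropLast := by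
    rw [List.dropLast_cons_of_ne_nil hl]
    rcases eq_or_ne l.dropLast [] with hd | hd
    · rw [hd]
      have hlen1 : l.length ≤ 1 := by
        cases l with
        | nil => simp
        | cons x m =>
          cases m with
          | nil => simp
          | cons y k => simp at hd
      rw [Kmid, if_pos hlen1]
      simp [contK, contA]
    · rw [contK_cons a l.dropLast hd, tail_dropLast', Kmid, if_neg]
      · ring
      · intro hc
        cases l with
        | nil => exact hl rfl
        | cons x m =>
          cases m with
          | nil => simp at hd
          | cons y k => simp at hc
  have h11 : contK (a :: l) = contK l.tail + a * contK l := by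
    rw [contK_cons a l hl]; ring
  rw [h00, h10, h11]
  simp [List.tail_cons]

lemma Mmat_single (a : ℤ) : Mmat [a] = !![0, 1; 1, a] := by
  simp [Mmat, Kmid, contK, contA, Kbr]

lemma Mmat_append : ∀ (α : List ℤ), α ≠ [] → ∀ β : List ℤ, β ≠ [] →
    Mmat (α ++ β) = Mmat α * Mmat β
  | [a], _, β, hβ => by
    rw [List.singleton_append, Mmat_cons a β hβ, Mmat_single]
  | a :: b :: l, _, β, hβ => by
    rw [List.cons_append, Mmat_cons a ((b :: l) ++ β) (by simp),
      Mmat_append (b :: l) (by simp) β hβ, Mmat_cons a (b :: l) (by simp),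
      Matrix.mul_assoc]

lemma Mmat_det : ∀ (α : List ℤ), α ≠ [] → (Mmat α).det = (-1) ^ α.length
  | [a], _ => by
    rw [Mmat_single]
    simp [Matrix.det_fin_two_of]
  | a :: b :: l, _ => by
    have : (a :: b :: l) = [a] ++ (b :: l) := rfl
    rw [this, Mmat_append [a] (by simp) (b :: l) (by simp), Matrix.det_mul,
      Mmat_det (b :: l) (by simp), Mmat_single]
    simp [Matrix.det_fin_two_of, pow_succ]

theorem Kbr_recurrence (α β : List ℤ) (hα : α ≠ []) (hβ : β ≠ [])
    (hαe : α.length % 2 = 0)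
    (hαpos : ∀ a ∈ α, 0 < a) (hβpos : ∀ a ∈ β, 0 < a) :
    Kbr α ∣ Kbr (α ++ α) ∧ 0 < Kbr (α ++ α) / Kbr α ∧
      Kbr (α ++ α ++ β) =
        (Kbr (α ++ α) / Kbr α) * Kbr (α ++ β) - Kbr β := by
  set p := Kmid α with hp'
  set q := contK α.tail with hq'
  set r := contK α.dropLast with hr'
  set s := contK α with hs'
  have hMα : Mmat α = !![p, q; r, s] := rfl
  -- determinant
  have hdet : p * s - q * r = 1 := by
    have h := Mmat_det α hα
    rw [hMα, Matrix.det_fin_two_of] at h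
    rw [h]
    rw [← Nat.even_iff] at hαe
    exact (Even.neg_one_pow hαe)
  -- positivity
  have hr : 0 < r := contK_pos _ (fun x hx => hαpos x (List.dropLast_subset α hx))
  have hs : 0 < s := contK_pos _ hαpos
  have hp : 0 ≤ p := by
    rw [hp', Kmid]
    split
    · exact le_refl 0
    · exact (contK_pos _ (fun x hx => hαpos x
        (List.tail_subset α (List.dropLast_subset _ hx)))).le
  -- matrix products
  have EAA : Mmat (α ++ α) = !![p, q; r, s] * !![p, q; r, s] := by
    rw [Mmat_append α hα α hα, hMα]
  have EAB : Mmat (α ++ β) = !![p, q; r, s] * Mmat β := by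
    rw [Mmat_append α hα β hβ, hMα]
  have EAAB : Mmat (α ++ α ++ β) = Mmat (α ++ α) * Mmat β :=
    Mmat_append (α ++ α) (by simp [hα]) β hβ
  set pβ := Kmid β
  set rβ := contK β.dropLast
  have hMβ : Mmat β = !![pβ, contK β.tail; rβ, contK β] := rfl
  have hKbr : ∀ γ : List ℤ, Kbr γ = Mmat γ 1 0 := by
    intro γ; simp [Kbr, Mmat]
  have h1 : Kbr (α ++ α) = r * (p + s) := by
    rw [hKbr, EAA, Matrix.mul_fin_two]
    simp
    ring
  have h2 : Kbr (α ++ β) = r * pβ + s * rβ := by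
    rw [hKbr, EAB, hMβ, Matrix.mul_fin_two]
    simp
  have h3 : Kbr (α ++ α ++ β) = (p * p + q * r) * 0 +
      ((r * p + s * r) * pβ + (r * q + s * s) * rβ) := by
    rw [hKbr, EAAB, EAA, hMβ, Matrix.mul_fin_two, Matrix.mul_fin_two]
    simp
  have hquot : Kbr (α ++ α) / Kbr α = p + s := by
    rw [h1]
    show r * (p + s) / r = p + s
    exact Int.mul_ediv_cancel_left _ hr.ne'
  refine ⟨?_, ?_, ?_⟩
  · rw [h1]; exact Dvd.intro _ rfl
  · rw [hquot]; positivity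
  · rw [hquot, h3, h2]
    have hb : Kbr β = rβ := rfl
    linear_combination (-rβ) * hdet + hb
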